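/- Let H be a finite simple graph and s a positive integer. Then box_ℓ(H) ≤ s if and only if there exist a finite graph G that is a disjoint union of co-interval graphs and an edge-surjective homomorphism φ : G → Hᶜ such that every fiber of φ has at most s elements. (In other words, the local boxicity box_ℓ(H) equals the folded covering number of Hᶜ with respect to disjoint unions of co-interval graphs.) -/

import Mathlib

universe u

/-- A graph is an interval graph if its vertices can be assigned nonempty closed
intervals of `ℝ` so that distinct vertices are adjacent iff their intervals meet. -/
def IsIntervalGraph {V : Type*} (G : SimpleGraph V) : Prop :=
  ∃ I : V → Set ℝ,
    (∀ v, ∃ a b : ℝ, a ≤ b ∧ I v = Set.Icc a b) ∧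
    ∀ u v : V, u ≠ v → (G.Adj u v ↔ (I u ∩ I v).Nonempty)

/-- A co-interval graph is the complement of an interval graph. -/
def IsCoIntervalGraph {V : Type*} (G : SimpleGraph V) : Prop :=
  IsIntervalGraph Gᶜ

/-- `G` is a vertex-disjoint union of co-interval graphs: its vertex set can be
partitioned (here via the fibers of a map `c`) so that every edge joins two vertices of
the same part and the restriction to each part is a co-interval graph. -/
def IsUnionCoIntervalGraph {V : Type u} (G : SimpleGraph V) : Prop :=
  ∃ (ι : Type u) (c : V → ι),
    (∀ u v : V, G.Adj u v → c u = c v) ∧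
    ∀ i : ι, IsCoIntervalGraph (G.induce {v | c v = i})

/-- There is a covering of the edges of `Hᶜ` by finitely many subgraphs
`G 0, …, G (t-1)` of `Hᶜ`, each of which restricted to its non-isolated vertices is a
co-interval graph, such that every vertex is a non-isolated vertex of at most `s`
of them. -/
def LocalCoverLE {V : Type u} (H : SimpleGraph V) (s : ℕ) : Prop :=
  ∃ (t : ℕ) (G : Fin t → SimpleGraph V),
    (∀ i, G i ≤ Hᶜ) ∧
    (∀ u v : V, Hᶜ.Adj u v → ∃ i, (G i).Adj u v) ∧
    (∀ i, IsCoIntervalGraph ((G i).induce (G i).support)) ∧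
    ∀ v : V, {i : Fin t | v ∈ (G i).support}.ncard ≤ s

/-- The local boxicity of `H`. -/
noncomputable def localBoxicity {V : Type u} (H : SimpleGraph V) : ℕ :=
  sInf {s : ℕ | LocalCoverLE H s}

/-- The union boxicity of `H`: the least `k` such that `Hᶜ` is covered by `k`
subgraphs, each a vertex-disjoint union of co-interval graphs. -/
noncomputable def unionBoxicity {V : Type u} (H : SimpleGraph V) : ℕ :=
  sInf {k : ℕ | ∃ G : Fin k → SimpleGraph V,
    (∀ i, G i ≤ Hᶜ) ∧
    (∀ u v : V, Hᶜ.Adj u v → ∃ i, (G i).Adj u v) ∧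
    ∀ i, IsUnionCoIntervalGraph (G i)}

/-- The boxicity of `H`: the least `d` such that `H` is the intersection of `d`
interval graphs on its vertex set. -/
noncomputable def boxicity {V : Type u} (H : SimpleGraph V) : ℕ :=
  sInf {d : ℕ | ∃ G : Fin d → SimpleGraph V,
    (∀ i, IsIntervalGraph (G i)) ∧
    ∀ u v : V, u ≠ v → (H.Adj u v ↔ ∀ i, (G i).Adj u v)}

lemma isIntervalGraph_of_no_edges {W : Type*} [Finite W] (G : SimpleGraph W)
    (h : ∀ u v : W, ¬ G.Adj u v) : IsIntervalGraph G := by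
  obtain ⟨n, ⟨f⟩⟩ := Finite.exists_equiv_fin W
  refine ⟨fun v => Set.Icc ((f v : ℕ) : ℝ) ((f v : ℕ) : ℝ), fun v => ⟨_, _, le_refl _, rfl⟩, ?_⟩
  intro u v huv
  simp only [Set.Icc_self]
  constructor
  · intro hadj; exact absurd hadj (h u v)
  · rintro ⟨x, hx1, hx2⟩
    simp only [Set.mem_singleton_iff] at hx1 hx2
    apply absurd _ huv
    apply f.injective
    apply Fin.val_injective
    exact_mod_cast hx1 ▸ hx2

lemma isCoIntervalGraph_of_complete {W : Type*} [Finite W] (G : SimpleGraph W)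
    (h : ∀ u v : W, u ≠ v → G.Adj u v) : IsCoIntervalGraph G := by
  apply isIntervalGraph_of_no_edges
  intro u v hadj
  rw [SimpleGraph.compl_adj] at hadj
  exact hadj.2 (h u v hadj.1)

/-- single edge graph -/
def edgeGraph {V : Type u} (u v : V) (huv : u ≠ v) : SimpleGraph V where
  Adj x y := (x = u ∧ y = v) ∨ (x = v ∧ y = u)
  symm := by constructor; rintro x y (⟨rfl, rfl⟩ | ⟨rfl, rfl⟩) <;> simp
  loopless := by
    constructor; rintro x (⟨rfl, rfl⟩ | ⟨rfl, rfl⟩) <;> exact huv rfl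

lemma edgeGraph_support {V : Type u} (u v : V) (huv : u ≠ v) :
    (edgeGraph u v huv).support = {u, v} := by
  ext x
  simp only [SimpleGraph.mem_support, Set.mem_insert_iff, Set.mem_singleton_iff]
  constructor
  · rintro ⟨y, (⟨rfl, rfl⟩ | ⟨rfl, rfl⟩)⟩ <;> simp
  · rintro (rfl | rfl)
    · exact ⟨v, Or.inl ⟨rfl, rfl⟩⟩
    · exact ⟨u, Or.inr ⟨rfl, rfl⟩⟩

lemma exists_localCoverLE {V : Type} [Fintype V] (H : SimpleGraph V) :
    ∃ s, LocalCoverLE H s := by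
  classical
  set P := {p : V × V // Hᶜ.Adj p.1 p.2} with hP
  haveI : Fintype P := Fintype.ofFinite P
  set t := Fintype.card P with ht
  set e := (Fintype.equivFin P).symm with he
  refine ⟨t, t, fun j => edgeGraph (e j).1.1 (e j).1.2 (e j).2.ne, ?_, ?_, ?_, ?_⟩
  · intro j x y hadj
    rcases hadj with ⟨rfl, rfl⟩ | ⟨rfl, rfl⟩
    · exact (e j).2
    · exact (e j).2.symm
  · intro x y hadj
    refine ⟨e.symm ⟨(x, y), hadj⟩, ?_⟩
    simp only [Equiv.apply_symm_apply]
    exact Or.inl ⟨rfl, rfl⟩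
  · intro j
    apply isCoIntervalGraph_of_complete
    rintro ⟨x, hx⟩ ⟨y, hy⟩ hne
    rw [edgeGraph_support] at hx hy
    have hxy : (x : V) ≠ y := fun h => hne (Subtype.ext h)
    show (edgeGraph (e j).1.1 (e j).1.2 (e j).2.ne).Adj x y
    rcases hx with rfl | rfl <;> rcases hy with rfl | rfl
    · exact absurd rfl hxy
    · exact Or.inl ⟨rfl, rfl⟩
    · exact Or.inr ⟨rfl, rfl⟩
    · exact absurd rfl hxy
  · intro v
    calc {i : Fin t | v ∈ _}.ncard ≤ (Set.univ : Set (Fin t)).ncard :=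
          Set.ncard_le_ncard (Set.subset_univ _) Set.finite_univ
      _ = t := by rw [Set.ncard_univ]; simp

lemma isCoIntervalGraph_of_equiv {W X : Type*} (G : SimpleGraph W) (G' : SimpleGraph X)
    (e : W ≃ X) (h : ∀ u v : W, u ≠ v → (G.Adj u v ↔ G'.Adj (e u) (e v)))
    (hG' : IsCoIntervalGraph G') : IsCoIntervalGraph G := by
  obtain ⟨I, hIcc, hadj⟩ := hG'
  refine ⟨fun w => I (e w), fun w => hIcc (e w), ?_⟩
  intro u v huv
  have hee : e u ≠ e v := fun hh => huv (e.injective hh)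
  have h1 : Gᶜ.Adj u v ↔ G'ᶜ.Adj (e u) (e v) := by
    rw [SimpleGraph.compl_adj, SimpleGraph.compl_adj]
    constructor
    · rintro ⟨_, hn⟩; exact ⟨hee, fun ha => hn ((h u v huv).2 ha)⟩
    · rintro ⟨_, hn⟩; exact ⟨huv, fun ha => hn ((h u v huv).1 ha)⟩
  rw [h1]
  exact hadj _ _ hee

lemma forward_dir {V : Type} [Fintype V] (H : SimpleGraph V) (s : ℕ)
    (hL : LocalCoverLE H s) :
    ∃ (U : Type) (_ : Fintype U) (G : SimpleGraph U) (φ : G →g Hᶜ),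
      IsUnionCoIntervalGraph G ∧
      (∀ u v : V, Hᶜ.Adj u v → ∃ a b : U, G.Adj a b ∧ φ a = u ∧ φ b = v) ∧
      ∀ v : V, {u : U | φ u = v}.ncard ≤ s := by
  classical
  obtain ⟨t, Gs, hle, hcov, hco, hcard⟩ := hL
  set U := {q : V × Fin t // q.1 ∈ (Gs q.2).support} with hU
  haveI : Fintype U := Fintype.ofFinite U
  set GU : SimpleGraph U :=
    { Adj := fun p q => p.1.2 = q.1.2 ∧ (Gs p.1.2).Adj p.1.1 q.1.1
      symm := by
        constructor
        rintro p q ⟨h1, h2⟩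
        exact ⟨h1.symm, h1 ▸ h2.symm⟩
      loopless := by
        constructor
        rintro p ⟨_, h2⟩
        exact (Gs p.1.2).irrefl h2 } with hGU
  set φ : GU →g Hᶜ :=
    { toFun := fun p => p.1.1
      map_rel' := by
        rintro p q ⟨h1, h2⟩
        exact hle _ h2 } with hφ
  refine ⟨U, inferInstance, GU, φ, ⟨Fin t, fun p => p.1.2, ?_, ?_⟩, ?_, ?_⟩
  · rintro p q ⟨h1, _⟩; exact h1
  · -- each part is co-interval
    intro i
    refine isCoIntervalGraph_of_equiv _ ((Gs i).induce (Gs i).support)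
      ⟨fun p => ⟨p.1.1.1, by
          have h2 : p.1.1.2 = i := p.2
          have h1 := p.1.2
          rw [h2] at h1; exact h1⟩,
       fun w => ⟨⟨⟨w.1, i⟩, w.2⟩, rfl⟩, ?_, ?_⟩ ?_ (hco i)
    · rintro ⟨⟨⟨v, j⟩, hsup⟩, hj⟩
      simp only [Set.mem_setOf_eq] at hj
      subst hj
      rfl
    · rintro ⟨v, hv⟩; rfl
    · rintro ⟨⟨⟨x, jx⟩, hsx⟩, hjx⟩ ⟨⟨⟨y, jy⟩, hsy⟩, hjy⟩ hne
      simp only [Set.mem_setOf_eq] at hjx hjy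
      subst hjx; subst hjy
      exact ⟨fun h => h.2, fun h => ⟨rfl, h⟩⟩
  · intro u v hadj
    obtain ⟨i, hi⟩ := hcov u v hadj
    refine ⟨⟨⟨u, i⟩, ⟨v, hi⟩⟩, ⟨⟨v, i⟩, ⟨u, hi.symm⟩⟩, ⟨rfl, hi⟩, rfl, rfl⟩
  · intro v
    refine le_trans ?_ (hcard v)
    refine Set.ncard_le_ncard_of_injOn (fun p => p.1.2) ?_ ?_ ?_
    · intro p hp
      have hp' : p.1.1 = v := hp
      simp only [Set.mem_setOf_eq]
      exact hp' ▸ p.2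
    · intro p hp q hq heq
      have hp' : p.1.1 = v := hp
      have hq' : q.1.1 = v := hq
      exact Subtype.ext (Prod.ext (hp'.trans hq'.symm) heq)
    · exact (Set.finite_univ (α := Fin t)).subset (Set.subset_univ _)

lemma backward_dir {V : Type} [Fintype V] (H : SimpleGraph V) (s : ℕ)
    (U : Type) (instU : Fintype U) (G : SimpleGraph U) (φ : G →g Hᶜ)
    (hunion : IsUnionCoIntervalGraph G)
    (hsurj : ∀ u v : V, Hᶜ.Adj u v → ∃ a b : U, G.Adj a b ∧ φ a = u ∧ φ b = v)
    (hfib : ∀ v : V, {u : U | φ u = v}.ncard ≤ s) :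
    LocalCoverLE H s := by
  classical
  obtain ⟨ι, c, hc, hparts⟩ := hunion
  -- the image graphs, one per color
  set Gi : ι → SimpleGraph V := fun i =>
    { Adj := fun u v => ∃ a b : U, c a = i ∧ c b = i ∧ φ a = u ∧ φ b = v ∧ G.Adj a b
      symm := by
        constructor
        rintro u v ⟨a, b, h1, h2, h3, h4, h5⟩
        exact ⟨b, a, h2, h1, h4, h3, h5.symm⟩
      loopless := by
        constructor
        rintro u ⟨a, b, h1, h2, h3, h4, h5⟩
        exact Hᶜ.irrefl (h3 ▸ h4 ▸ φ.map_rel h5) } with hGi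
  set R : Set ι := Set.range c with hR
  haveI : Fintype R := Fintype.ofFinite R
  set t := Fintype.card R with ht
  set e := (Fintype.equivFin R).symm with he
  refine ⟨t, fun j => Gi (e j), ?_, ?_, ?_, ?_⟩
  · rintro j u v ⟨a, b, h1, h2, h3, h4, h5⟩
    exact h3 ▸ h4 ▸ φ.map_rel h5
  · intro u v hadj
    obtain ⟨a, b, hab, ha, hb⟩ := hsurj u v hadj
    have hcc : c a ∈ R := ⟨a, rfl⟩
    refine ⟨e.symm ⟨c a, hcc⟩, ?_⟩
    have h1 : (e (e.symm ⟨c a, hcc⟩) : ι) = c a := by rw [Equiv.apply_symm_apply]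
    exact ⟨a, b, h1.symm ▸ rfl, by rw [h1]; exact (hc a b hab).symm, ha, hb, hab⟩
  · -- co-intervality of the image graphs, via Helly
    intro j
    set i : ι := (e j : ι) with hi
    set P : Set U := {a : U | c a = i} with hPdef
    obtain ⟨I, hIcc, hIadj⟩ := hparts i
    choose α β hαβ hIeq using hIcc
    -- key: nonadjacent in G within the part implies intervals meet
    have key : ∀ a b : ↥P, ¬ G.Adj a b → α a ≤ β b := by
      intro a b hnadj
      by_cases hab : a = b
      · subst hab; exact hαβ a
      · have hadj' : ((G.induce P)ᶜ).Adj a b := ⟨hab, fun h => hnadj h⟩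
        obtain ⟨x, hx1, hx2⟩ := (hIadj a b hab).1 hadj'
        rw [hIeq a] at hx1; rw [hIeq b] at hx2
        exact le_trans hx1.1 hx2.2
    -- fibers
    set fib : V → Finset U := fun v => Finset.univ.filter (fun a => φ a = v ∧ c a = i)
      with hfibdef
    have hmemfib : ∀ (v : V) (a : U), a ∈ fib v ↔ φ a = v ∧ c a = i := by
      intro v a; simp [hfibdef]
    have hfibP : ∀ (v : V) (a : U), a ∈ fib v → a ∈ P := fun v a ha => (hmemfib v a |>.1 ha).2
    have hfibne : ∀ w : ↥((Gi i).support), (fib w).Nonempty := by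
      rintro ⟨w, hw⟩
      obtain ⟨w', a, b, h1, h2, h3, h4, h5⟩ := hw
      exact ⟨a, (hmemfib w a).2 ⟨h3, h1⟩⟩
    -- extended endpoint functions
    set αe : U → ℝ := fun a => if h : a ∈ P then α ⟨a, h⟩ else 0 with hαe
    set βe : U → ℝ := fun a => if h : a ∈ P then β ⟨a, h⟩ else 0 with hβe
    have hαe' : ∀ (a : U) (h : a ∈ P), αe a = α ⟨a, h⟩ := by
      intro a h; simp [hαe, h]
    have hβe' : ∀ (a : U) (h : a ∈ P), βe a = β ⟨a, h⟩ := by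
      intro a h; simp [hβe, h]
    set A : ↥((Gi i).support) → ℝ := fun w => (fib w).sup' (hfibne w) αe with hA
    set B : ↥((Gi i).support) → ℝ := fun w => (fib w).inf' (hfibne w) βe with hB
    -- pairs in the same fiber or nonadjacent fibers give α ≤ β
    have cross : ∀ (w w' : ↥((Gi i).support)) (a b : U), a ∈ fib w → b ∈ fib w' →
        ¬ G.Adj a b → αe a ≤ βe b := by
      intro w w' a b ha hb hnadj
      have hpa := hfibP _ a ha
      have hpb := hfibP _ b hb
      rw [hαe' a hpa, hβe' b hpb]
      exact key ⟨a, hpa⟩ ⟨b, hpb⟩ hnadj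
    have same : ∀ (w : ↥((Gi i).support)) (a b : U), a ∈ fib w → b ∈ fib w →
        αe a ≤ βe b := by
      intro w a b ha hb
      refine cross w w a b ha hb ?_
      intro hadj
      have h1 := ((hmemfib _ a).1 ha).1
      have h2 := ((hmemfib _ b).1 hb).1
      exact Hᶜ.irrefl (h1 ▸ h2 ▸ φ.map_rel hadj)
    have hAB : ∀ w, A w ≤ B w := by
      intro w
      refine Finset.sup'_le _ _ fun a ha => Finset.le_inf' _ _ fun b hb => same w a b ha hb
    refine ⟨fun w => Set.Icc (A w) (B w), fun w => ⟨A w, B w, hAB w, rfl⟩, ?_⟩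
    rintro u v huv
    have huv' : (u : V) ≠ (v : V) := fun h => huv (Subtype.ext h)
    constructor
    · -- complement adjacency → intervals meet
      rintro ⟨-, hnadj⟩
      have hnot : ∀ a ∈ fib u, ∀ b ∈ fib v, ¬ G.Adj a b := by
        intro a ha b hb hadj
        refine hnadj ?_
        show (Gi i).Adj u v
        exact ⟨a, b, ((hmemfib _ a).1 ha).2, ((hmemfib _ b).1 hb).2,
          ((hmemfib _ a).1 ha).1, ((hmemfib _ b).1 hb).1, hadj⟩
      have h1 : A u ≤ B v := Finset.sup'_le _ _ fun a ha => Finset.le_inf' _ _ fun b hb =>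
        cross u v a b ha hb (hnot a ha b hb)
      have h2 : A v ≤ B u := Finset.sup'_le _ _ fun b hb => Finset.le_inf' _ _ fun a ha =>
        cross v u b a hb ha (fun h => hnot a ha b hb h.symm)
      refine ⟨max (A u) (A v), ?_, ?_⟩
      · exact ⟨le_max_left _ _, max_le (hAB u) h2⟩
      · exact ⟨le_max_right _ _, max_le h1 (hAB v)⟩
    · -- intervals meet → complement adjacency
      rintro ⟨x, hx1, hx2⟩
      refine ⟨huv, ?_⟩
      rintro ⟨a, b, h1, h2, h3, h4, h5⟩
      -- a,b adjacent in G, both in part i, so their intervals are disjoint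
      have ha : a ∈ fib u := (hmemfib _ a).2 ⟨h3, h1⟩
      have hb : b ∈ fib v := (hmemfib _ b).2 ⟨h4, h2⟩
      have hab : a ≠ b := by
        rintro rfl
        exact huv' (h3.symm.trans h4)
      have hpa : a ∈ P := h1
      have hpb : b ∈ P := h2
      have hne : (⟨a, hpa⟩ : ↥P) ≠ ⟨b, hpb⟩ := fun h => hab (congrArg Subtype.val h)
      have hdisj : ¬ (I ⟨a, hpa⟩ ∩ I ⟨b, hpb⟩).Nonempty := by
        intro hmeet
        have := (hIadj _ _ hne).2 hmeet
        exact this.2 h5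
      refine hdisj ⟨x, ?_, ?_⟩
      · rw [hIeq]
        constructor
        · rw [← hαe' a hpa]
          exact le_trans (Finset.le_sup' αe ha) hx1.1
        · rw [← hβe' a hpa]
          exact le_trans hx1.2 (Finset.inf'_le βe ha)
      · rw [hIeq]
        constructor
        · rw [← hαe' b hpb]
          exact le_trans (Finset.le_sup' αe hb) hx2.1
        · rw [← hβe' b hpb]
          exact le_trans hx2.2 (Finset.inf'_le βe hb)
  · -- the ncard bound
    intro v
    rcases Set.eq_empty_or_nonempty {j : Fin t | v ∈ (Gi (e j : ι)).support} with h0 | ⟨j0, hj0⟩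
    · rw [h0, Set.ncard_empty]; exact Nat.zero_le s
    · have hw : ∀ j ∈ {j : Fin t | v ∈ (Gi (e j : ι)).support},
          ∃ a : U, φ a = v ∧ c a = (e j : ι) := by
        rintro j hj
        obtain ⟨w', a, b, h1, h2, h3, h4, h5⟩ := hj
        exact ⟨a, h3, h1⟩
      haveI : Nonempty U := ⟨(hw j0 hj0).choose⟩
      refine le_trans (Set.ncard_le_ncard_of_injOn
        (fun j => if h : j ∈ {j : Fin t | v ∈ (Gi (e j : ι)).support}
          then (hw j h).choose else Classical.arbitrary U) ?_ ?_ ?_) (hfib v)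
      · intro j hj
        simp only [dif_pos hj]
        exact ((hw j hj).choose_spec).1
      · intro j hj j' hj' heq
        simp only [dif_pos hj, dif_pos hj'] at heq
        have h1 := ((hw j hj).choose_spec).2
        have h2 := ((hw j' hj').choose_spec).2
        rw [heq] at h1
        exact e.injective (Subtype.ext (h1.symm.trans h2))
      · exact Set.toFinite _

lemma localCoverLE_mono {V : Type u} (H : SimpleGraph V) {s s' : ℕ}
    (h : LocalCoverLE H s) (hss : s ≤ s') : LocalCoverLE H s' := by
  obtain ⟨t, G, h1, h2, h3, h4⟩ := h
  exact ⟨t, G, h1, h2, h3, fun v => le_trans (h4 v) hss⟩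

/-- `box_ℓ(H) ≤ s` iff there is a disjoint union of co-interval graphs
`G` together with an edge-surjective homomorphism `φ : G → Hᶜ` all of whose fibers have
at most `s` elements, i.e. the local boxicity equals the folded covering number of `Hᶜ`
with respect to disjoint unions of co-interval graphs. -/
theorem stmt_6 {V : Type} [Fintype V] (H : SimpleGraph V) (s : ℕ) (hs : 0 < s) :
    localBoxicity H ≤ s ↔
    ∃ (U : Type) (_ : Fintype U) (G : SimpleGraph U) (φ : G →g Hᶜ),
      IsUnionCoIntervalGraph G ∧
      (∀ u v : V, Hᶜ.Adj u v → ∃ a b : U, G.Adj a b ∧ φ a = u ∧ φ b = v) ∧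
      ∀ v : V, {u : U | φ u = v}.ncard ≤ s := by
  constructor
  · intro h
    obtain ⟨s0, hs0⟩ := exists_localCoverLE H
    have hmem := Nat.sInf_mem (⟨s0, hs0⟩ : {s : ℕ | LocalCoverLE H s}.Nonempty)
    exact forward_dir H s (localCoverLE_mono H hmem h)
  · rintro ⟨U, instU, G, φ, h1, h2, h3⟩
    exact Nat.sInf_le (backward_dir H s U instU G φ h1 h2 h3)
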